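/- Let p₀ be a squarefree integer with 3 ∤ p₀, set p = 9·p₀, and let q be a positive integer coprime to p. Then there do not exist integers m, ℓ, ℓ₀, A, B, σ, S, V and ε ∈ {1, -1} such that: m·p − q·ℓ² = ε·p, ℓ² = p·ℓ₀, p ∤ ℓ, and −12·ε·q·B + 3·ε·S − 3·ε·p·σ = 24·p·A + 24·q·m·B − 2·p − ℓ₀·(q² + 1) + ℓ²·(m·q + p) + 12·q·V − ε·p·(1 + m). -/
import Mathlib


/-- Let p₀ be a squarefree integer with 3 ∤ p₀, set p = 9·p₀, and let q be a
positive integer coprime to p. Then there do not exist integers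
m, ℓ, ℓ₀, A, B, σ, S, V and ε ∈ {1, -1} such that: m·p − q·ℓ² = ε·p,
ℓ² = p·ℓ₀, p ∤ ℓ, and
−12·ε·q·B + 3·ε·S − 3·ε·p·σ =
  24·p·A + 24·q·m·B − 2·p − ℓ₀·(q² + 1) + ℓ²·(m·q + p) + 12·q·V − ε·p·(1 + m). -/
theorem stmt_7 (p₀ p q : ℤ) (hsf : Squarefree p₀) (h3 : ¬ (3 ∣ p₀))
    (hp : p = 9 * p₀) (hq : 0 < q) (hpq : IsCoprime p q) :
    ¬ ∃ (m ℓ ℓ₀ A B σ S V ε : ℤ), (ε = 1 ∨ ε = -1) ∧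
      m * p - q * ℓ ^ 2 = ε * p ∧
      ℓ ^ 2 = p * ℓ₀ ∧
      ¬ (p ∣ ℓ) ∧
      -12 * ε * q * B + 3 * ε * S - 3 * ε * p * σ =
        24 * p * A + 24 * q * m * B - 2 * p - ℓ₀ * (q ^ 2 + 1) +
          ℓ ^ 2 * (m * q + p) + 12 * q * V - ε * p * (1 + m) := by
  rintro ⟨m, ℓ, ℓ₀, A, B, σ, S, V, ε, hε, hm, hsq, hpl, heq⟩
  have h3p : Prime (3 : ℤ) := Int.prime_three
  -- 3 ∣ ℓ
  have h3l : (3 : ℤ) ∣ ℓ := by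
    refine h3p.dvd_of_dvd_pow (n := 2) ?_
    rw [hsq, hp]; exact ⟨3 * p₀ * ℓ₀, by ring⟩
  obtain ⟨k, hk⟩ := h3l
  have hk2 : k ^ 2 = p₀ * ℓ₀ := by
    have h9 : (3 * k) ^ 2 = 9 * p₀ * ℓ₀ := by rw [← hk, hsq, hp]
    nlinarith [h9]
  have hpk : p₀ ∣ k := by
    rw [← hsf.dvd_pow_iff_dvd (two_ne_zero), hk2]; exact ⟨ℓ₀, rfl⟩
  obtain ⟨u, hu⟩ := hpk
  have hp0 : p₀ ≠ 0 := hsf.ne_zero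
  have hl0 : ℓ₀ = p₀ * u ^ 2 := by
    have h := hk2
    rw [hu] at h
    have : p₀ * (p₀ * u ^ 2) = p₀ * ℓ₀ := by rw [← h]; ring
    exact (mul_left_cancel₀ hp0 this).symm
  have h3u : ¬ (3 : ℤ) ∣ u := by
    rintro ⟨v, hv⟩
    exact hpl ⟨v, by rw [hk, hu, hv, hp]; ring⟩
  -- 3 ∣ ℓ₀ * (q² + 1)
  have hl2 : ℓ ^ 2 = 9 * p₀ ^ 2 * u ^ 2 := by rw [hk, hu]; ring
  rw [hl2, hp, hl0] at heq
  have hdvd : (3 : ℤ) ∣ (p₀ * u ^ 2) * (q ^ 2 + 1) := by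
    refine ⟨72 * p₀ * A + 8 * q * m * B - 6 * p₀ + 3 * p₀ ^ 2 * u ^ 2 * (m * q + 9 * p₀)
      + 4 * q * V - 3 * ε * p₀ * (1 + m) + 4 * ε * q * B - ε * S + 9 * ε * p₀ * σ, ?_⟩
    linear_combination heq
  rcases h3p.dvd_mul.mp hdvd with h | h
  · rcases h3p.dvd_mul.mp h with h' | h'
    · exact h3 h'
    · exact h3u (h3p.dvd_of_dvd_pow h')
  · -- 3 ∣ q² + 1 is impossible
    have hz : ((q : ZMod 3) ^ 2 + 1) = 0 := by
      have := (ZMod.intCast_zmod_eq_zero_iff_dvd (q ^ 2 + 1) 3).mpr h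
      push_cast at this
      exact this
    have : ∀ x : ZMod 3, x ^ 2 + 1 ≠ 0 := by decide
    exact this q hz
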